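/- Let P be a finite abelian 2-group and H a finite abelian group of odd order acting on P with C_P(H) = 1. Write P in its homocyclic (elementary divisor) decomposition P ≅ ∏_{i ≥ 1} (ℤ/2^i ℤ)^{t_i}, with the multiplicities t_i uniquely determined by P. Then t_i ≠ 1 for every i ≥ 1. -/
import Mathlib

private lemma zcast0 {e k : ℕ} (h : e ≤ k) : ((2 ^ k : ℕ) : ZMod (2 ^ e)) = 0 := by
  haveI : NeZero (2 ^ e) := ⟨by positivity⟩
  exact (ZMod.natCast_eq_zero_iff _ _).mpr (pow_dvd_pow 2 h)

private lemma zker2 {e : ℕ} (he : 1 ≤ e) (x : ZMod (2 ^ e)) (hx : x + x = 0) :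
    x = 0 ∨ x = ((2 ^ (e - 1) : ℕ) : ZMod (2 ^ e)) := by
  haveI : NeZero (2 ^ e) := ⟨by positivity⟩
  have h1 : ((x.val + x.val : ℕ) : ZMod (2 ^ e)) = 0 := by
    push_cast
    simp only [ZMod.natCast_val, ZMod.cast_id]
    exact hx
  have h2 : 2 ^ e ∣ x.val + x.val := (ZMod.natCast_eq_zero_iff _ _).mp h1
  have hee : (2:ℕ) ^ e = 2 * 2 ^ (e - 1) := by
    conv_lhs => rw [show e = 1 + (e-1) from (Nat.add_sub_cancel' he).symm]
    ring
  have h2' : 2 * 2 ^ (e - 1) ∣ 2 * x.val := by rw [← hee]; rwa [two_mul]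
  have h3 : 2 ^ (e - 1) ∣ x.val := (Nat.mul_dvd_mul_iff_left two_pos).mp h2'
  obtain ⟨k, hk⟩ := h3
  have hlt : x.val < 2 ^ e := ZMod.val_lt x
  have hk2 : k < 2 := by
    by_contra hkk
    push_neg at hkk
    have : 2 ^ e ≤ x.val := by
      rw [hk, hee]
      calc 2 * 2 ^ (e-1) = 2 ^ (e-1) * 2 := by ring
        _ ≤ 2 ^ (e-1) * k := Nat.mul_le_mul_left _ hkk
    omega
  have hx' : x = ((x.val : ℕ) : ZMod (2 ^ e)) := by
    rw [ZMod.natCast_val, ZMod.cast_id]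
  interval_cases k
  · left; rw [hx', hk]; simp
  · right; rw [hx', hk]; simp

private lemma zker2' {e i : ℕ} (he2 : i + 1 ≤ e) (x : ZMod (2 ^ e)) (hx : x + x = 0) :
    ∃ c : ZMod (2 ^ e), ((2 ^ i : ℕ) : ZMod (2 ^ e)) * c = x := by
  rcases zker2 (by omega) x hx with h | h
  · exact ⟨0, by simp [h]⟩
  · refine ⟨((2 ^ (e - 1 - i) : ℕ) : ZMod (2 ^ e)), ?_⟩
    rw [h, ← Nat.cast_mul, ← pow_add]
    rw [show i + (e - 1 - i) = e - 1 by omega]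

/-- componentwise characterization of n-th powers in the product -/
private lemma pow_iff {m : ℕ} (e : Fin m → ℕ) (n : ℕ)
    (x : (j : Fin m) → Multiplicative (ZMod (2 ^ e j))) :
    (∃ y, y ^ n = x) ↔
      ∀ j, ∃ d : ZMod (2 ^ e j), (n : ZMod (2 ^ e j)) * d = Multiplicative.toAdd (x j) := by
  constructor
  · rintro ⟨y, rfl⟩ j
    exact ⟨Multiplicative.toAdd (y j), by
      simp [Pi.pow_apply, toAdd_pow, nsmul_eq_mul]⟩
  · intro h
    choose d hd using h
    refine ⟨fun j => Multiplicative.ofAdd (d j), funext fun j => ?_⟩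
    have : Multiplicative.toAdd ((fun j => Multiplicative.ofAdd (d j)) j ^ n)
        = Multiplicative.toAdd (x j) := by
      simp [toAdd_pow, nsmul_eq_mul, hd j]
    exact Multiplicative.toAdd.injective this


/-- Let `P` be a finite abelian `2`-group and `H` a finite abelian group of odd order
acting on `P` with `C_P(H) = 1`. Write `P` in its homocyclic (elementary divisor)
decomposition `P ≅ ∏_j ℤ/2^{e j}ℤ` (so that the multiplicity `t_i` of `ℤ/2^iℤ` is the
number of indices `j` with `e j = i`). Then `t_i ≠ 1` for every `i ≥ 1`. -/
theorem stmt13 (P H : Type) [CommGroup P] [CommGroup H] [Fintype P] [Fintype H]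
    (hP : IsPGroup 2 P) (hH : Odd (Nat.card H))
    (φ : H →* MulAut P)
    (hfix : ∀ x : P, (∀ h : H, φ h x = x) → x = 1)
    (m : ℕ) (e : Fin m → ℕ) (he : ∀ j, 1 ≤ e j)
    (hiso : Nonempty (P ≃* ((j : Fin m) → Multiplicative (ZMod (2 ^ e j)))))
    (i : ℕ) (hi : 1 ≤ i) :
    (Finset.univ.filter fun j => e j = i).card ≠ 1 := by
  intro hcard
  obtain ⟨σ⟩ := hiso
  rw [Finset.card_eq_one] at hcard
  obtain ⟨j₀, hj₀⟩ := hcard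
  have hej₀ : e j₀ = i := by
    have : j₀ ∈ Finset.univ.filter fun j => e j = i := hj₀ ▸ Finset.mem_singleton_self j₀
    simpa using this
  have huniq : ∀ j, e j = i → j = j₀ := by
    intro j hj
    have : j ∈ ({j₀} : Finset (Fin m)) := hj₀ ▸ (by simp [hj])
    simpa using this
  -- the PN predicate (componentwise membership in the 2^i-th powers subgroup)
  set PN : ((j : Fin m) → Multiplicative (ZMod (2 ^ e j))) → Prop :=
    fun x => ∀ j, ∃ d : ZMod (2 ^ e j),
      ((2 ^ i : ℕ) : ZMod (2 ^ e j)) * d = Multiplicative.toAdd (x j) with hPNdef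
  -- the distinguished element x₀
  set x₀ : (j : Fin m) → Multiplicative (ZMod (2 ^ e j)) :=
    fun j => Multiplicative.ofAdd (if e j = i then ((2 ^ (i-1) : ℕ) : ZMod (2 ^ e j)) else 0)
    with hx₀def
  have hx₀sq : x₀ * x₀ = 1 := by
    funext j
    apply Multiplicative.toAdd.injective
    simp only [Pi.mul_apply, toAdd_mul, Pi.one_apply, toAdd_one, hx₀def, toAdd_ofAdd]
    by_cases hj : e j = i
    · simp only [if_pos hj]
      rw [← Nat.cast_add, show (2:ℕ)^(i-1) + 2^(i-1) = 2^i by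
        rw [← two_mul, ← pow_succ']; congr 1; omega]
      exact zcast0 (le_of_eq hj)
    · simp [if_neg hj]
  have hx₀M : ∃ y, y ^ (2 ^ (i-1)) = x₀ := by
    rw [pow_iff]
    intro j
    by_cases hj : e j = i
    · refine ⟨1, ?_⟩
      simp [hx₀def, if_pos hj]
    · exact ⟨0, by simp [hx₀def, if_neg hj]⟩
  have hx₀N : ¬ PN x₀ := by
    intro h
    obtain ⟨d, hd⟩ := h j₀
    rw [zcast0 (le_of_eq hej₀), zero_mul] at hd
    have : ((2 ^ (i-1) : ℕ) : ZMod (2 ^ e j₀)) = 0 := by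
      have hx0j : Multiplicative.toAdd (x₀ j₀) = ((2 ^ (i-1) : ℕ) : ZMod (2 ^ e j₀)) := by
        simp [hx₀def, if_pos hej₀]
      rw [hx0j] at hd
      exact hd.symm
    haveI hnz : NeZero (2 ^ e j₀) := ⟨by positivity⟩
    have hdvd : 2 ^ e j₀ ∣ 2 ^ (i-1) := (ZMod.natCast_eq_zero_iff _ _).mp this
    rw [hej₀] at hdvd
    have := (Nat.pow_dvd_pow_iff_le_right (by norm_num : 1 < 2)).mp hdvd
    omega
  -- doubling lemma from squares
  have hsq_comp : ∀ x : ((j : Fin m) → Multiplicative (ZMod (2 ^ e j))), x * x = 1 →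
      ∀ j, Multiplicative.toAdd (x j) + Multiplicative.toAdd (x j) = 0 := by
    intro x hx j
    have := congrFun hx j
    simpa [Pi.mul_apply] using congrArg Multiplicative.toAdd this
  -- the value at j₀ of any element of M \ N
  have hval : ∀ x : ((j : Fin m) → Multiplicative (ZMod (2 ^ e j))),
      x * x = 1 → (∃ y, y ^ (2 ^ (i-1)) = x) → ¬ PN x →
      Multiplicative.toAdd (x j₀) = ((2 ^ (i-1) : ℕ) : ZMod (2 ^ e j₀)) := by
    intro x hxx hxM hxN
    have hdub := hsq_comp x hxx
    obtain ⟨j', hj'⟩ := not_forall.mp hxN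
    rw [not_exists] at hj'
    have hMcomp := (pow_iff e (2 ^ (i-1)) x).mp hxM
    -- j' must equal j₀
    have hj'i : e j' = i := by
      rcases lt_trichotomy (e j') i with hlt | heq | hgt
      · exfalso
        obtain ⟨d', hd'⟩ := hMcomp j'
        rw [zcast0 (e := e j') (k := i - 1) (by omega), zero_mul] at hd'
        exact hj' 0 (by rw [mul_zero, ← hd'])
      · exact heq
      · exfalso
        obtain ⟨c, hc⟩ := zker2' (e := e j') (i := i) (by omega) _ (hdub j')
        exact hj' c hc
    have hjj : j' = j₀ := huniq j' hj'i
    subst hjj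
    have hne : Multiplicative.toAdd (x j') ≠ 0 := by
      intro h0
      exact hj' 0 (by rw [mul_zero, h0])
    rcases zker2 (he j') _ (hdub j') with h | h
    · exact absurd h hne
    · rw [h, show e j' - 1 = i - 1 by omega]
  -- difference of two elements of M \ N lies in N
  have hdiff : ∀ a b : ((j : Fin m) → Multiplicative (ZMod (2 ^ e j))),
      a * a = 1 → (∃ y, y ^ (2 ^ (i-1)) = a) → ¬ PN a →
      b * b = 1 → (∃ y, y ^ (2 ^ (i-1)) = b) → ¬ PN b →
      PN (a / b) := by
    intro a b haa haM haN hbb hbM hbN j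
    have hda := hsq_comp a haa j
    have hdb := hsq_comp b hbb j
    have htd : Multiplicative.toAdd ((a / b) j)
        = Multiplicative.toAdd (a j) - Multiplicative.toAdd (b j) := by
      simp [Pi.div_apply]
    rcases lt_trichotomy (e j) i with hlt | heq | hgt
    · -- both components are 0
      have hza : Multiplicative.toAdd (a j) = 0 := by
        obtain ⟨d', hd'⟩ := (pow_iff e (2 ^ (i-1)) a).mp haM j
        rw [zcast0 (e := e j) (k := i - 1) (by omega), zero_mul] at hd'
        exact hd'.symm
      have hzb : Multiplicative.toAdd (b j) = 0 := by
        obtain ⟨d', hd'⟩ := (pow_iff e (2 ^ (i-1)) b).mp hbM j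
        rw [zcast0 (e := e j) (k := i - 1) (by omega), zero_mul] at hd'
        exact hd'.symm
      exact ⟨0, by rw [mul_zero, htd, hza, hzb, sub_zero]⟩
    · have hjj : j = j₀ := huniq j heq
      subst hjj
      refine ⟨0, ?_⟩
      rw [mul_zero, htd, hval a haa haM haN, hval b hbb hbM hbN, sub_self]
    · have hdd : (Multiplicative.toAdd (a j) - Multiplicative.toAdd (b j))
          + (Multiplicative.toAdd (a j) - Multiplicative.toAdd (b j)) = 0 := by
        have : (Multiplicative.toAdd (a j) - Multiplicative.toAdd (b j))
            + (Multiplicative.toAdd (a j) - Multiplicative.toAdd (b j))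
            = (Multiplicative.toAdd (a j) + Multiplicative.toAdd (a j))
              - (Multiplicative.toAdd (b j) + Multiplicative.toAdd (b j)) := by ring
        rw [this, hda, hdb, sub_zero]
      obtain ⟨c, hc⟩ := zker2' (e := e j) (i := i) (by omega) _ hdd
      exact ⟨c, by rw [hc, htd]⟩
  -- PN is closed under products and inverses
  have hPNmul : ∀ u v, PN u → PN v → PN (u * v) := by
    intro u v hu hv j
    obtain ⟨d₁, h₁⟩ := hu j
    obtain ⟨d₂, h₂⟩ := hv j
    exact ⟨d₁ + d₂, by rw [mul_add, h₁, h₂, Pi.mul_apply, toAdd_mul]⟩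
  have hPNone : PN 1 := fun j => ⟨0, by simp⟩
  have hPNinv : ∀ u, PN u → PN u⁻¹ := by
    intro u hu j
    obtain ⟨d, hd⟩ := hu j
    exact ⟨-d, by rw [mul_neg, hd, Pi.inv_apply, toAdd_inv]⟩
  -- the twisted action on the product
  set ψ : H → (((j : Fin m) → Multiplicative (ZMod (2 ^ e j))) ≃*
      ((j : Fin m) → Multiplicative (ZMod (2 ^ e j)))) :=
    fun h => (σ.symm.trans (φ h)).trans σ with hψdef
  have hψ_apply : ∀ h q, ψ h q = σ (φ h (σ.symm q)) := fun h q => rfl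
  have hψfix : ∀ q, (∀ h : H, ψ h q = q) → q = 1 := by
    intro q hq
    have h1 : σ.symm q = 1 := by
      apply hfix
      intro h
      have := congrArg σ.symm (hq h)
      rw [hψ_apply, MulEquiv.symm_apply_apply] at this
      exact this
    calc q = σ (σ.symm q) := (σ.apply_symm_apply q).symm
      _ = 1 := by rw [h1, map_one]
  have hψcomp : ∀ (g h : H) q, ψ g (ψ h q) = ψ (g * h) q := by
    intro g h q
    simp only [hψ_apply, MulEquiv.symm_apply_apply, map_mul, MulAut.mul_apply]
  -- properties of ψ h x₀
  have hψsq : ∀ h : H, (ψ h x₀) * (ψ h x₀) = 1 := by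
    intro h
    rw [← map_mul, hx₀sq, map_one]
  have hψM : ∀ h : H, ∃ y, y ^ (2 ^ (i-1)) = ψ h x₀ := by
    intro h
    obtain ⟨y, hy⟩ := hx₀M
    exact ⟨ψ h y, by rw [← map_pow, hy]⟩
  have hψN : ∀ h : H, ¬ PN (ψ h x₀) := by
    intro h hPN
    apply hx₀N
    have h1 : ∃ z, z ^ (2 ^ i) = ψ h x₀ := (pow_iff e (2 ^ i) _).mpr hPN
    obtain ⟨z, hz⟩ := h1
    have h2 : ((ψ h).symm z) ^ (2 ^ i) = x₀ := by
      rw [← map_pow, hz, MulEquiv.symm_apply_apply]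
    exact (pow_iff e (2 ^ i) x₀).mp ⟨_, h2⟩
  -- the average
  set y : ((j : Fin m) → Multiplicative (ZMod (2 ^ e j))) := ∏ h : H, ψ h x₀ with hydef
  have hyfix : ∀ g : H, ψ g y = y := by
    intro g
    rw [hydef, map_prod]
    have h1 : ∀ h : H, ψ g (ψ h x₀) = ψ (g * h) x₀ := fun h => hψcomp g h x₀
    calc ∏ h : H, ψ g (ψ h x₀) = ∏ h : H, ψ (g * h) x₀ := by
          exact Finset.prod_congr rfl (fun h _ => h1 h)
      _ = ∏ h : H, ψ h x₀ := Equiv.prod_comp (Equiv.mulLeft g) (fun h => ψ h x₀)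
  have hy1 : y = 1 := hψfix y hyfix
  -- decompose y
  have hysplit : y = x₀ ^ (Fintype.card H) * ∏ h : H, (ψ h x₀ / x₀) := by
    rw [hydef]
    calc ∏ h : H, ψ h x₀ = ∏ h : H, (x₀ * (ψ h x₀ / x₀)) :=
          Finset.prod_congr rfl (fun h _ => by rw [mul_div_cancel])
      _ = (∏ _h : H, x₀) * ∏ h : H, (ψ h x₀ / x₀) := Finset.prod_mul_distrib
      _ = x₀ ^ (Fintype.card H) * ∏ h : H, (ψ h x₀ / x₀) := by
          rw [Finset.prod_const, Finset.card_univ]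
  have hxcard : x₀ ^ (Fintype.card H) = x₀ := by
    obtain ⟨k, hk⟩ := hH
    rw [Nat.card_eq_fintype_card] at hk
    rw [hk, pow_add, pow_one, pow_mul, show x₀ ^ 2 = 1 by rw [pow_two, hx₀sq], one_pow, one_mul]
  have hprodN : PN (∏ h : H, (ψ h x₀ / x₀)) :=
    Finset.prod_induction _ PN hPNmul hPNone
      (fun h _ => hdiff (ψ h x₀) x₀ (hψsq h) (hψM h) (hψN h) hx₀sq hx₀M hx₀N)
  have hfin : x₀ = (∏ h : H, (ψ h x₀ / x₀))⁻¹ := by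
    have h1 : x₀ ^ Fintype.card H * ∏ h : H, (ψ h x₀ / x₀) = 1 := by
      rw [← hysplit]; exact hy1
    calc x₀ = x₀ ^ Fintype.card H := hxcard.symm
      _ = (∏ h : H, (ψ h x₀ / x₀))⁻¹ := eq_inv_of_mul_eq_one_left h1
  exact hx₀N (hfin ▸ hPNinv _ hprodN)
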